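/- arXiv:2411.04701 — 2 statements merged into one kernel-verified Lean document; each statement's English description precedes it below -/
import Mathlib

section
/- The equidistributing map satisfies the bounds (m₀/M₁)·R·(ξ₂-ξ₁) ≤ x(ξ₂) - x(ξ₁) ≤ (M₁/m₀)·R·(ξ₂-ξ₁) for 0 ≤ ξ₁ ≤ ξ₂ ≤ 1, where 0 < m₀ ≤ M ≤ M₁ on [0,R]. -/
open MeasureTheory Set intervalIntegral

/-- The equidistributing map satisfies
`(m₀/M₁) R (ξ₂-ξ₁) ≤ x(ξ₂) - x(ξ₁) ≤ (M₁/m₀) R (ξ₂-ξ₁)` for `0 ≤ ξ₁ ≤ ξ₂ ≤ 1`,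
where `0 < m₀ ≤ M ≤ M₁` on `[0,R]`. -/
theorem stmt_10 (R m₀ M₁ : ℝ) (hR : 0 < R) (M : ℝ → ℝ)
    (hMc : ContinuousOn M (Icc 0 R)) (hm₀ : 0 < m₀)
    (hMbd : ∀ s ∈ Icc (0:ℝ) R, m₀ ≤ M s ∧ M s ≤ M₁)
    (x : ℝ → ℝ) (hmap : MapsTo x (Icc 0 1) (Icc 0 R))
    (heq : ∀ ξ ∈ Icc (0:ℝ) 1,
      (∫ s in (0:ℝ)..(x ξ), M s) = ξ * ∫ s in (0:ℝ)..R, M s) :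
    ∀ ξ₁ ξ₂ : ℝ, 0 ≤ ξ₁ → ξ₁ ≤ ξ₂ → ξ₂ ≤ 1 →
      (m₀ / M₁) * R * (ξ₂ - ξ₁) ≤ x ξ₂ - x ξ₁ ∧
      x ξ₂ - x ξ₁ ≤ (M₁ / m₀) * R * (ξ₂ - ξ₁) := by
  intro ξ₁ ξ₂ h1 h12 h2
  have hξ₁ : ξ₁ ∈ Icc (0:ℝ) 1 := ⟨h1, h12.trans h2⟩
  have hξ₂ : ξ₂ ∈ Icc (0:ℝ) 1 := ⟨h1.trans h12, h2⟩
  have hx1 := hmap hξ₁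
  have hx2 := hmap hξ₂
  set a := x ξ₁ with ha
  set b := x ξ₂ with hb
  have hintg : ∀ c d : ℝ, c ∈ Icc 0 R → d ∈ Icc 0 R → c ≤ d →
      IntervalIntegrable M volume c d := by
    intro c d hc hd hcd
    apply (hMc.mono ?_).intervalIntegrable
    rw [uIcc_of_le hcd]
    exact Icc_subset_Icc hc.1 hd.2
  have key : ∀ c d : ℝ, c ∈ Icc 0 R → d ∈ Icc 0 R → c ≤ d →
      m₀ * (d - c) ≤ (∫ s in c..d, M s) ∧ (∫ s in c..d, M s) ≤ M₁ * (d - c) := by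
    intro c d hc hd hcd
    have hsub : Icc c d ⊆ Icc 0 R := Icc_subset_Icc hc.1 hd.2
    have hint := hintg c d hc hd hcd
    constructor
    · have := intervalIntegral.integral_mono_on hcd (_root_.intervalIntegrable_const (c := m₀)) hint
        (fun s hs => (hMbd s (hsub hs)).1)
      simpa [mul_comm] using this
    · have := intervalIntegral.integral_mono_on hcd hint (_root_.intervalIntegrable_const (c := M₁))
        (fun s hs => (hMbd s (hsub hs)).2)
      simpa [mul_comm] using this
  have h0R : (0:ℝ) ∈ Icc (0:ℝ) R := ⟨le_refl 0, hR.le⟩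
  have hRR : R ∈ Icc (0:ℝ) R := ⟨hR.le, le_refl R⟩
  set I := ∫ s in (0:ℝ)..R, M s with hI
  obtain ⟨hI1, hI2⟩ := key 0 R h0R hRR hR.le
  rw [sub_zero] at hI1 hI2
  have hJ : (∫ s in a..b, M s) = (ξ₂ - ξ₁) * I := by
    have := intervalIntegral.integral_interval_sub_left
      (hintg 0 b ⟨le_refl 0, hR.le⟩ hx2 hx2.1) (hintg 0 a ⟨le_refl 0, hR.le⟩ hx1 hx1.1)
    rw [heq ξ₂ hξ₂, heq ξ₁ hξ₁] at this
    rw [← this]; ring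
  have hJnn : 0 ≤ (∫ s in a..b, M s) := by
    rw [hJ]
    have : 0 < I := lt_of_lt_of_le (by positivity) hI1
    nlinarith
  have hab : a ≤ b := by
    by_contra hc
    push_neg at hc
    obtain ⟨hk1, _⟩ := key b a hx2 hx1 hc.le
    rw [intervalIntegral.integral_symm] at hJnn
    nlinarith
  obtain ⟨hk1, hk2⟩ := key a b hx1 hx2 hab
  rw [hJ] at hk1 hk2
  constructor
  · rw [div_mul_eq_mul_div, div_mul_eq_mul_div, div_le_iff₀ (lt_of_lt_of_le hm₀ ((hMbd 0 h0R).1.trans (hMbd 0 h0R).2))]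
    nlinarith
  · rw [div_mul_eq_mul_div, div_mul_eq_mul_div, le_div_iff₀ hm₀]
    nlinarith
end

section
/- For the tridiagonal system arising from the semi-implicit moving mesh scheme, M_{i+1/2}(x_{i+1} - x_i) - M_{i-1/2}(x_i - x_{i-1}) = 0 for i=1,…,N with x_0 = 0, x_{N+1} = R and all coefficients M_{i±1/2} > 0, the solution exists, is unique, and is strictly increasing: 0 = x_0 < x_1 < ⋯ < x_{N+1} = R. -/
open Finset

/-- The tridiagonal moving-mesh system `M_{i+1/2}(x_{i+1}-x_i) - M_{i-1/2}(x_i-x_{i-1}) = 0`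
for `i = 1,…,N`, with `x_0 = 0`, `x_{N+1} = R` and positive coefficients, has a solution
that is strictly increasing, and this solution is unique. (`Mc i` denotes `M_{i+1/2}`.) -/
theorem stmt_14 (N : ℕ) (R : ℝ) (hR : 0 < R) (Mc : ℕ → ℝ)
    (hMc : ∀ i ≤ N, 0 < Mc i) :
    ∃ x : ℕ → ℝ,
      (x 0 = 0 ∧ x (N + 1) = R ∧
        ∀ i : ℕ, 1 ≤ i → i ≤ N →
          Mc i * (x (i + 1) - x i) - Mc (i - 1) * (x i - x (i - 1)) = 0) ∧
      (∀ i ≤ N, x i < x (i + 1)) ∧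
      (∀ y : ℕ → ℝ,
        (y 0 = 0 ∧ y (N + 1) = R ∧
          ∀ i : ℕ, 1 ≤ i → i ≤ N →
            Mc i * (y (i + 1) - y i) - Mc (i - 1) * (y i - y (i - 1)) = 0) →
        ∀ i ≤ N + 1, y i = x i) := by
  set S : ℝ := ∑ j ∈ Finset.range (N + 1), (Mc j)⁻¹ with hSdef
  have hSpos : 0 < S :=
    Finset.sum_pos (fun j hj => inv_pos.2 (hMc j (Nat.lt_succ_iff.1 (Finset.mem_range.1 hj))))
      (by simp)
  have hSne : S ≠ 0 := hSpos.ne'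
  set x : ℕ → ℝ := fun i => (R / S) * ∑ j ∈ Finset.range i, (Mc j)⁻¹ with hxdef
  have hd : ∀ i, x (i + 1) - x i = (R / S) * (Mc i)⁻¹ := by
    intro i
    simp [hxdef, Finset.sum_range_succ, mul_add]
  have hx0 : x 0 = 0 := by simp [hxdef]
  have hxR : x (N + 1) = R := by
    simp only [hxdef, ← hSdef]
    field_simp
  refine ⟨x, ⟨hx0, hxR, ?_⟩, ?_, ?_⟩
  · intro i hi1 hiN
    have h2 : x i - x (i - 1) = (R / S) * (Mc (i - 1))⁻¹ := by
      have := hd (i - 1)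
      rwa [Nat.sub_add_cancel hi1] at this
    rw [hd i, h2]
    have hne1 : Mc i ≠ 0 := (hMc i hiN).ne'
    have hne2 : Mc (i - 1) ≠ 0 := (hMc (i - 1) (le_trans (Nat.sub_le i 1) hiN)).ne'
    field_simp
    ring
  · intro i hiN
    have := hd i
    have hpos : 0 < (R / S) * (Mc i)⁻¹ :=
      mul_pos (div_pos hR hSpos) (inv_pos.2 (hMc i hiN))
    linarith
  · rintro y ⟨hy0, hyR, hyE⟩
    set G : ℝ := Mc 0 * (y 1 - y 0) with hGdef
    have hflux : ∀ i ≤ N, Mc i * (y (i + 1) - y i) = G := by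
      intro i
      induction i with
      | zero => intro _; rfl
      | succ n ih =>
        intro hn
        have hE := hyE (n + 1) (Nat.le_add_left 1 n) hn
        simp only [Nat.add_sub_cancel] at hE
        have := ih (Nat.le_of_succ_le hn)
        linarith
    have hform : ∀ i ≤ N + 1, y i = G * ∑ j ∈ Finset.range i, (Mc j)⁻¹ := by
      intro i
      induction i with
      | zero => intro _; simpa using hy0
      | succ n ih =>
        intro hn
        have hnN : n ≤ N := Nat.lt_succ_iff.1 hn
        have hfl := hflux n hnN
        have hne : Mc n ≠ 0 := (hMc n hnN).ne'
        have hyn : y (n + 1) = y n + G * (Mc n)⁻¹ := by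
          field_simp at hfl ⊢
          linarith
        rw [hyn, ih (Nat.le_of_succ_le hn), Finset.sum_range_succ, mul_add]
    have hGS : G * S = R := by
      have := hform (N + 1) le_rfl
      rw [hyR] at this
      exact this.symm
    have hG : G = R / S := by
      field_simp
      linarith [hGS]
    intro i hi
    rw [hform i hi, hG, hxdef]
end
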